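/- arXiv:1701.07242 — 3 statements merged into one kernel-verified Lean document; each statement's English description precedes it below -/
import Mathlib

section
/- The treewidth of the primal graph is at most (tw_i + 1) · max_i |J(i)| − 1, where tw_i is the treewidth of the incidence graph and J(i) is the set of jobs processable on machine i. -/
open Finset

/-- The primal graph: vertices are jobs, distinct jobs adjacent iff a common machine exists. -/
def primalGraph {J I : Type} [DecidableEq I] (Mach : J → Finset I) : SimpleGraph J where
  Adj j j' := j ≠ j' ∧ (Mach j ∩ Mach j').Nonempty
  symm := by
    constructor
    intro a b h
    exact ⟨Ne.symm h.1, by rw [Finset.inter_comm]; exact h.2⟩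
  loopless := ⟨fun a h => h.1 rfl⟩

/-- The dual graph: vertices are machines, distinct machines adjacent iff a common job exists. -/
def dualGraph {J I : Type} [DecidableEq I] (Mach : J → Finset I) : SimpleGraph I where
  Adj i i' := i ≠ i' ∧ ∃ j, i ∈ Mach j ∧ i' ∈ Mach j
  symm := by
    constructor
    rintro a b ⟨h1, j, hj1, hj2⟩
    exact ⟨h1.symm, j, hj2, hj1⟩
  loopless := ⟨fun a h => h.1 rfl⟩

/-- The incidence graph: bipartite on jobs and machines, job `j` adjacent to machine `i`
iff `i ∈ M(j)`. -/
def incidenceGraph {J I : Type} [DecidableEq I] (Mach : J → Finset I) : SimpleGraph (J ⊕ I) where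
  Adj x y := (∃ j i, x = Sum.inl j ∧ y = Sum.inr i ∧ i ∈ Mach j) ∨
             (∃ j i, x = Sum.inr i ∧ y = Sum.inl j ∧ i ∈ Mach j)
  symm := by
    constructor
    rintro x y (⟨j, i, rfl, rfl, h⟩ | ⟨j, i, rfl, rfl, h⟩)
    · exact Or.inr ⟨j, i, rfl, rfl, h⟩
    · exact Or.inl ⟨j, i, rfl, rfl, h⟩
  loopless := by
    constructor
    rintro x (⟨j, i, h1, h2, _⟩ | ⟨j, i, h1, h2, _⟩) <;> subst h1 <;> simp_all

/-- A tree decomposition of a graph `G`. -/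
structure TreeDecomp (V : Type) (G : SimpleGraph V) (ι : Type) where
  T : SimpleGraph ι
  isTree : T.IsTree
  bag : ι → Finset V
  cover : ∀ v, ∃ t, v ∈ bag t
  edgecover : ∀ ⦃u v⦄, G.Adj u v → ∃ t, u ∈ bag t ∧ v ∈ bag t
  conn : ∀ v, (T.induce {t | v ∈ bag t}).Connected

/-- The treewidth of a graph. -/
noncomputable def treewidth {V : Type} (G : SimpleGraph V) : ℕ :=
  sInf {k | ∃ (ι : Type) (d : TreeDecomp V G ι), ∀ t, (d.bag t).card ≤ k + 1}

/-- Trivial tree decomposition: a single bag containing everything. -/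
def trivialDecomp {V : Type} [Fintype V] (G : SimpleGraph V) : TreeDecomp V G Unit where
  T := ⊥
  isTree := ⟨{ preconnected := fun a b => by
                 cases Subsingleton.elim a b; exact SimpleGraph.Reachable.refl _
               nonempty := ⟨()⟩ }, SimpleGraph.isAcyclic_bot⟩
  bag := fun _ => Finset.univ
  cover := fun v => ⟨(), Finset.mem_univ v⟩
  edgecover := fun u v _ => ⟨(), Finset.mem_univ u, Finset.mem_univ v⟩
  conn := fun v =>
    { preconnected := fun a b => by
        cases Subsingleton.elim a b; exact SimpleGraph.Reachable.refl _
      nonempty := ⟨⟨(), Finset.mem_univ v⟩⟩ }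

/-- Reachability in an induced subgraph lifts along set inclusion. -/
lemma reach_mono {V : Type} {G : SimpleGraph V} {A S : Set V} (h : A ⊆ S) {x y : V}
    (hx : x ∈ A) (hy : y ∈ A)
    (hr : (G.induce A).Reachable ⟨x, hx⟩ ⟨y, hy⟩) :
    (G.induce S).Reachable ⟨x, h hx⟩ ⟨y, h hy⟩ := by
  let φ : G.induce A →g G.induce S := ⟨Set.inclusion h, fun {a b} hab => hab⟩
  exact hr.map φ

/-- The treewidth of the primal graph is at most `(tw_i + 1) · max_i |J(i)| − 1`, where
`tw_i` is the treewidth of the incidence graph and `J(i)` the set of jobs processable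
on machine `i`. -/
theorem treewidth_primal_le_incidence
    {J I : Type} [Fintype J] [DecidableEq J] [Fintype I] [DecidableEq I]
    (Mach : J → Finset I) (hfeas : ∀ j, (Mach j).Nonempty) :
    treewidth (primalGraph Mach) ≤
      (treewidth (incidenceGraph Mach) + 1) *
        (Finset.univ.sup fun i : I => (Finset.univ.filter fun j => i ∈ Mach j).card) - 1 := by
  classical
  -- the bag-expansion function
  set f : (J ⊕ I) → Finset J := fun x => match x with
    | Sum.inl j => {j}
    | Sum.inr i => Finset.univ.filter fun j => i ∈ Mach j
    with hf
  set maxJ := Finset.univ.sup fun i : I => (Finset.univ.filter fun j => i ∈ Mach j).card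
    with hmaxJ
  have hfcard : ∀ x, (f x).card ≤ maxJ := by
    rintro (j | i)
    · obtain ⟨i, hi⟩ := hfeas j
      have h1 : 1 ≤ (Finset.univ.filter fun j' => i ∈ Mach j').card :=
        Finset.card_pos.mpr ⟨j, by simp [hi]⟩
      calc (f (Sum.inl j)).card = 1 := by simp [hf]
        _ ≤ _ := h1.trans (Finset.le_sup (f := fun i : I =>
          (Finset.univ.filter fun j => i ∈ Mach j).card) (Finset.mem_univ i))
    · simpa [hf] using Finset.le_sup (f := fun i : I =>
        (Finset.univ.filter fun j => i ∈ Mach j).card) (Finset.mem_univ i)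
  -- obtain an optimal tree decomposition of the incidence graph
  have hne : {k | ∃ (ι : Type) (d : TreeDecomp (J ⊕ I) (incidenceGraph Mach) ι),
      ∀ t, (d.bag t).card ≤ k + 1}.Nonempty :=
    ⟨Fintype.card (J ⊕ I), Unit, trivialDecomp _, fun t => by
      show (Finset.univ : Finset (J ⊕ I)).card ≤ _
      rw [Finset.card_univ]; exact Nat.le_succ _⟩
  obtain ⟨ι, d, hd⟩ : treewidth (incidenceGraph Mach) ∈ {k | ∃ (ι : Type)
      (d : TreeDecomp (J ⊕ I) (incidenceGraph Mach) ι), ∀ t, (d.bag t).card ≤ k + 1} :=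
    Nat.sInf_mem hne
  -- build the decomposition of the primal graph
  have hmem : ∀ (v : J) (t : ι), v ∈ (d.bag t).biUnion f ↔
      (Sum.inl v ∈ d.bag t ∨ ∃ i, i ∈ Mach v ∧ Sum.inr i ∈ d.bag t) := by
    intro v t
    simp only [Finset.mem_biUnion]
    constructor
    · rintro ⟨x, hx, hv⟩
      rcases x with j | i
      · simp only [hf, Finset.mem_singleton] at hv
        exact Or.inl (hv ▸ hx)
      · simp only [hf, Finset.mem_filter] at hv
        exact Or.inr ⟨i, hv.2, hx⟩
    · rintro (h | ⟨i, hi, h⟩)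
      · exact ⟨Sum.inl v, h, by simp [hf]⟩
      · exact ⟨Sum.inr i, h, by simp [hf, hi]⟩
  let d' : TreeDecomp J (primalGraph Mach) ι :=
  { T := d.T
    isTree := d.isTree
    bag := fun t => (d.bag t).biUnion f
    cover := fun v => by
      obtain ⟨t, ht⟩ := d.cover (Sum.inl v)
      exact ⟨t, (hmem v t).mpr (Or.inl ht)⟩
    edgecover := by
      rintro u v ⟨huv, i, hi⟩
      rw [Finset.mem_inter] at hi
      obtain ⟨t, ht1, ht2⟩ := d.edgecover
        (show (incidenceGraph Mach).Adj (Sum.inl u) (Sum.inr i) from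
          Or.inl ⟨u, i, rfl, rfl, hi.1⟩)
      exact ⟨t, (hmem u t).mpr (Or.inl ht1), (hmem v t).mpr (Or.inr ⟨i, hi.2, ht2⟩)⟩
    conn := by
      intro v
      set S : Set ι := {t | v ∈ (d.bag t).biUnion f} with hS
      have hAsub : {t | Sum.inl v ∈ d.bag t} ⊆ S := fun t ht =>
        (hmem v t).mpr (Or.inl ht)
      have hBsub : ∀ i, i ∈ Mach v → {t | Sum.inr i ∈ d.bag t} ⊆ S := fun i hi t ht =>
        (hmem v t).mpr (Or.inr ⟨i, hi, ht⟩)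
      obtain ⟨t0, ht0⟩ := d.cover (Sum.inl v)
      have key : ∀ x (hx : x ∈ S),
          (d.T.induce S).Reachable ⟨t0, hAsub ht0⟩ ⟨x, hx⟩ := by
        intro x hx
        rcases (hmem v x).mp hx with h | ⟨i, hi, h⟩
        · exact reach_mono hAsub ht0 h
            (((d.conn (Sum.inl v)).preconnected) ⟨t0, ht0⟩ ⟨x, h⟩)
        · obtain ⟨w, hw1, hw2⟩ := d.edgecover
            (show (incidenceGraph Mach).Adj (Sum.inl v) (Sum.inr i) from
              Or.inl ⟨v, i, rfl, rfl, hi⟩)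
          exact (reach_mono hAsub ht0 hw1
              (((d.conn (Sum.inl v)).preconnected) ⟨t0, ht0⟩ ⟨w, hw1⟩)).trans
            (reach_mono (hBsub i hi) hw2 h
              (((d.conn (Sum.inr i)).preconnected) ⟨w, hw2⟩ ⟨x, h⟩))
      exact { preconnected := fun a b => ((key a a.2).symm.trans (key b b.2))
              nonempty := ⟨⟨t0, hAsub ht0⟩⟩ } }
  -- cardinality bound
  apply Nat.sInf_le
  refine ⟨ι, d', fun t => ?_⟩
  have h1 : ((d.bag t).biUnion f).card ≤ (d.bag t).card * maxJ :=
    Finset.card_biUnion_le_card_mul _ _ _ (fun x _ => hfcard x)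
  have h2 : (d.bag t).card * maxJ ≤ (treewidth (incidenceGraph Mach) + 1) * maxJ :=
    Nat.mul_le_mul_right _ (hd t)
  have h3 : ((d.bag t).biUnion f).card ≤ (treewidth (incidenceGraph Mach) + 1) * maxJ :=
    h1.trans h2
  show ((d.bag t).biUnion f).card ≤ (treewidth (incidenceGraph Mach) + 1) * maxJ - 1 + 1
  omega
end

section
/- With definitions as for the primal-graph dynamic program, for an internal node t with children ℓ and r, the inactive machine sets of the two children (together with their nearly inactive machines) are disjoint: (I_M(ℓ) ∪ N_M(ℓ)) ∩ (I_M(r) ∪ N_M(r)) = ∅. -/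
open Finset

/-- A rooted tree decomposition of a graph `G`: nodes `ι` with a parent function whose
iteration reaches the root, bags covering all vertices and all edges, and for each
vertex `v` the set of nodes whose bag contains `v` forms a connected subtree (expressed
by path-convexity `conn` together with the existence of common ancestors `top`). -/
structure RootedTreeDecomp (V : Type) (G : SimpleGraph V) (ι : Type) where
  parent : ι → ι
  root : ι
  parent_root : parent root = root
  reach : ∀ t, ∃ n, parent^[n] t = root
  bag : ι → Set V
  cover : ∀ v, ∃ t, v ∈ bag t
  edgecover : ∀ ⦃u v⦄, G.Adj u v → ∃ t, u ∈ bag t ∧ v ∈ bag t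
  conn : ∀ v t₁ s t₂, v ∈ bag t₁ → v ∈ bag t₂ →
    (∃ n, parent^[n] t₁ = s) → (∃ n, parent^[n] s = t₂) → v ∈ bag s
  top : ∀ v t₁ t₂, v ∈ bag t₁ → v ∈ bag t₂ →
    ∃ m, (∃ n, parent^[n] t₁ = m) ∧ (∃ n, parent^[n] t₂ = m) ∧ v ∈ bag m

variable {V ι : Type} {G : SimpleGraph V}

/-- `t'` is a descendant of `t` (including `t` itself). -/
def RootedTreeDecomp.Desc (d : RootedTreeDecomp V G ι) (t' t : ι) : Prop :=
  ∃ n, d.parent^[n] t' = t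

section Primal

variable {J I : Type} [DecidableEq I] {Mach : J → Finset I}

/-- Active jobs at node `t`: the jobs in the bag `X_t`. -/
def activeJobs (d : RootedTreeDecomp J (primalGraph Mach) ι) (t : ι) : Set J := d.bag t

/-- Inactive jobs at node `t`: jobs not in `X_t` lying in the bag of a descendant of `t`. -/
def inactiveJobs (d : RootedTreeDecomp J (primalGraph Mach) ι) (t : ι) : Set J :=
  {j | j ∉ d.bag t ∧ ∃ t', d.Desc t' t ∧ j ∈ d.bag t'}

/-- Nearly inactive jobs at node `t`: active at `t` but not at its parent. -/
def nearlyInactiveJobs (d : RootedTreeDecomp J (primalGraph Mach) ι) (t : ι) : Set J :=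
  d.bag t \ d.bag (d.parent t)

/-- Inactive machines at `t`: machines on which some inactive job may be processed. -/
def inactiveMachs (d : RootedTreeDecomp J (primalGraph Mach) ι) (t : ι) : Set I :=
  {i | ∃ j ∈ inactiveJobs d t, i ∈ Mach j}

/-- Nearly inactive machines at `t`: machines of nearly inactive jobs that are not inactive. -/
def nearlyInactiveMachs (d : RootedTreeDecomp J (primalGraph Mach) ι) (t : ι) : Set I :=
  {i | ∃ j ∈ nearlyInactiveJobs d t, i ∈ Mach j} \ inactiveMachs d t

end Primal

lemma RootedTreeDecomp.root_fix (d : RootedTreeDecomp V G ι) :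
    ∀ k, d.parent^[k] d.root = d.root
  | 0 => rfl
  | k + 1 => by rw [Function.iterate_succ_apply', d.root_fix k, d.parent_root]

lemma RootedTreeDecomp.eq_root_of_cycle (d : RootedTreeDecomp V G ι) {t : ι} {p : ℕ}
    (hp : 0 < p) (h : d.parent^[p] t = t) : t = d.root := by
  obtain ⟨n, hn⟩ := d.reach t
  have hiter : ∀ k, d.parent^[p * k] t = t := by
    intro k
    induction k with
    | zero => rfl
    | succ k ih => rw [Nat.mul_succ, Function.iterate_add_apply, h, ih]
  have hle : n ≤ p * n := Nat.le_mul_of_pos_left n hp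
  calc t = d.parent^[p * n] t := (hiter n).symm
    _ = d.parent^[p * n - n] (d.parent^[n] t) := by
        rw [← Function.iterate_add_apply, Nat.sub_add_cancel hle]
    _ = d.root := by rw [hn, d.root_fix]

lemma RootedTreeDecomp.desc_helper (d : RootedTreeDecomp V G ι) {t l r m : ι} {a b : ℕ}
    (hl : d.parent l = t) (hr : d.parent r = t) (hlr : l ≠ r) (hrt : r ≠ t)
    (hml : d.parent^[a] m = l) (hmr : d.parent^[b] m = r) (hab : a ≤ b) : False := by
  rcases eq_or_lt_of_le hab with h | h
  · exact hlr (by rw [← hml, h, hmr])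
  · have hat : d.parent^[a + 1] m = t := by rw [Function.iterate_succ_apply', hml, hl]
    have hbr : d.parent^[b - (a + 1)] t = r := by
      rw [← hat, ← Function.iterate_add_apply, Nat.sub_add_cancel h, hmr]
    have hcyc : d.parent^[(b - (a + 1)) + 1] t = t := by
      rw [Function.iterate_succ_apply', hbr, hr]
    have hroot : t = d.root := d.eq_root_of_cycle (Nat.succ_pos _) hcyc
    exact hrt (by rw [← hbr, hroot, d.root_fix])

/-- No node is a descendant of both children `l` and `r` of `t`. -/
lemma RootedTreeDecomp.desc_disjoint (d : RootedTreeDecomp V G ι) {t l r m : ι}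
    (hl : d.parent l = t) (hr : d.parent r = t) (hlr : l ≠ r) (hlt : l ≠ t) (hrt : r ≠ t)
    (hml : d.Desc m l) (hmr : d.Desc m r) : False := by
  obtain ⟨a, ha⟩ := hml
  obtain ⟨b, hb⟩ := hmr
  rcases le_total a b with h | h
  · exact d.desc_helper hl hr hlr hrt ha hb h
  · exact d.desc_helper hr hl hlr.symm hlt hb ha h

/-- An ancestor `m` of a node `s` lying below a child `l` of `t` is either a
descendant of `l` or an ancestor of `t`. -/
lemma RootedTreeDecomp.anc_split (d : RootedTreeDecomp V G ι) {s m l t : ι} {n k : ℕ}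
    (hm : d.parent^[n] s = m) (hs : d.parent^[k] s = l) (hl : d.parent l = t) :
    d.Desc m l ∨ ∃ c, d.parent^[c] t = m := by
  rcases le_or_gt n k with h | h
  · exact Or.inl ⟨k - n, by
      rw [← hm, ← Function.iterate_add_apply, Nat.sub_add_cancel h, hs]⟩
  · refine Or.inr ⟨n - (k + 1), ?_⟩
    have hst : d.parent^[k + 1] s = t := by rw [Function.iterate_succ_apply', hs, hl]
    rw [← hst, ← Function.iterate_add_apply, Nat.sub_add_cancel h, hm]

lemma RootedTreeDecomp.desc_of_desc_child (d : RootedTreeDecomp V G ι) {s l t : ι}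
    (hl : d.parent l = t) (h : d.Desc s l) : d.Desc s t := by
  obtain ⟨n, hn⟩ := h
  exact ⟨n + 1, by rw [Function.iterate_succ_apply', hn, hl]⟩

section PrimalAux

variable {J I : Type} [DecidableEq I] {Mach : J → Finset I}

/-- From a (nearly) inactive machine of a child `l` of `t`, extract a witnessing job
occurring in a bag below `l` but not in the bag of `t`. -/
lemma key_witness (d : RootedTreeDecomp J (primalGraph Mach) ι) {t l : ι}
    (hl : d.parent l = t) {i : I}
    (hi : i ∈ inactiveMachs d l ∪ nearlyInactiveMachs d l) :
    ∃ j s, d.Desc s l ∧ j ∈ d.bag s ∧ j ∉ d.bag t ∧ i ∈ Mach j := by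
  rcases hi with h | h
  · obtain ⟨j, ⟨hjl, t', hdesc, hjt'⟩, hij⟩ := h
    refine ⟨j, t', hdesc, hjt', fun h' => hjl ?_, hij⟩
    exact d.conn j t' l t hjt' h' hdesc ⟨1, by simpa using hl⟩
  · obtain ⟨⟨j, hj, hij⟩, -⟩ := h
    exact ⟨j, l, ⟨0, rfl⟩, hj.1, by rw [← hl]; exact hj.2, hij⟩

/-- A common ancestor (with `j` in its bag) of a node below `l` and an ancestor of
`t` would force `j ∈ bag t`. -/
lemma bag_t_of_anc (d : RootedTreeDecomp J (primalGraph Mach) ι) {t l s m : ι} {j : J}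
    (hl : d.parent l = t) (hs : d.Desc s l) (hjs : j ∈ d.bag s) (hjm : j ∈ d.bag m)
    (hanc : ∃ c, d.parent^[c] t = m) : j ∈ d.bag t :=
  d.conn j s t m hjs hjm (d.desc_of_desc_child hl hs) hanc

end PrimalAux

/-- At an internal node `t` with children `ℓ` and `r` of a rooted binary tree
decomposition of the primal graph, the (nearly) inactive machine sets of the two
children are disjoint. -/
theorem inactiveMachs_children_disjoint
    {J I : Type} [DecidableEq I] (Mach : J → Finset I) {ι : Type}
    (d : RootedTreeDecomp J (primalGraph Mach) ι) (t l r : ι)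
    (hl : d.parent l = t) (hr : d.parent r = t)
    (hlr : l ≠ r) (hlt : l ≠ t) (hrt : r ≠ t)
    (hbin : ∀ s, d.parent s = t → s ≠ t → s = l ∨ s = r) :
    (inactiveMachs d l ∪ nearlyInactiveMachs d l) ∩
      (inactiveMachs d r ∪ nearlyInactiveMachs d r) = ∅ := by
  rw [Set.eq_empty_iff_forall_notMem]
  rintro i ⟨hiL, hiR⟩
  obtain ⟨j, sl, hsl, hjsl, hjt, hij⟩ := key_witness d hl hiL
  obtain ⟨j', sr, hsr, hjsr, hjt', hij'⟩ := key_witness d hr hiR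
  by_cases hjj : j = j'
  · subst hjj
    obtain ⟨m, ⟨n1, h1⟩, ⟨n2, h2⟩, hjm⟩ := d.top j sl sr hjsl hjsr
    obtain ⟨kl, hkl⟩ := hsl
    obtain ⟨kr, hkr⟩ := hsr
    rcases d.anc_split h1 hkl hl with hml | hanc
    · rcases d.anc_split h2 hkr hr with hmr | hanc
      · exact d.desc_disjoint hl hr hlr hlt hrt hml hmr
      · exact hjt' (bag_t_of_anc d hr ⟨kr, hkr⟩ hjsr hjm hanc)
    · exact hjt (bag_t_of_anc d hl ⟨kl, hkl⟩ hjsl hjm hanc)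
  · have hadj : (primalGraph Mach).Adj j j' := ⟨hjj, ⟨i, Finset.mem_inter.2 ⟨hij, hij'⟩⟩⟩
    obtain ⟨s, hjS, hjS'⟩ := d.edgecover hadj
    obtain ⟨m, ⟨n1, h1⟩, ⟨p, hp⟩, hjm⟩ := d.top j sl s hjsl hjS
    obtain ⟨kl, hkl⟩ := hsl
    rcases d.anc_split h1 hkl hl with hml | hanc
    swap
    · exact hjt (bag_t_of_anc d hl ⟨kl, hkl⟩ hjsl hjm hanc)
    obtain ⟨m', ⟨n2, h2⟩, ⟨q, hq⟩, hjm'⟩ := d.top j' sr s hjsr hjS'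
    obtain ⟨kr, hkr⟩ := hsr
    rcases d.anc_split h2 hkr hr with hmr | hanc
    swap
    · exact hjt' (bag_t_of_anc d hr ⟨kr, hkr⟩ hjsr hjm' hanc)
    obtain ⟨a, ha⟩ := hml
    obtain ⟨b, hb⟩ := hmr
    rcases le_total p q with hpq | hpq
    · -- m' is an ancestor of m
      have hmm' : d.parent^[q - p] m = m' := by
        rw [← hp, ← Function.iterate_add_apply, Nat.sub_add_cancel hpq, hq]
      rcases d.anc_split hmm' ha hl with hm'l | hanc
      · exact d.desc_disjoint hl hr hlr hlt hrt hm'l ⟨b, hb⟩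
      · exact hjt' (bag_t_of_anc d hr ⟨kr, hkr⟩ hjsr hjm' hanc)
    · -- m is an ancestor of m'
      have hm'm : d.parent^[p - q] m' = m := by
        rw [← hq, ← Function.iterate_add_apply, Nat.sub_add_cancel hpq, hp]
      rcases d.anc_split hm'm hb hr with hmr' | hanc
      · exact d.desc_disjoint hl hr hlr hlt hrt ⟨a, ha⟩ hmr'
      · exact hjt (bag_t_of_anc d hl ⟨kl, hkl⟩ hjsl hjm hanc)
end

section
/- With definitions as for the primal-graph dynamic program, every job processable by a machine in N_M(t) is active at t: for all i ∈ N_M(t), J(i) ⊆ A_J(t). -/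
open Finset

variable {V ι : Type} {G : SimpleGraph V}

/-- Every job processable by a nearly inactive machine of `t` is active at `t`:
for all `i ∈ N_M(t)`, `J(i) ⊆ A_J(t)`. -/
theorem jobs_of_nearlyInactive_machs_active
    {J I : Type} [DecidableEq I] (Mach : J → Finset I) {ι : Type}
    (d : RootedTreeDecomp J (primalGraph Mach) ι) (t : ι) :
    ∀ i ∈ nearlyInactiveMachs d t, ∀ j, i ∈ Mach j → j ∈ activeJobs d t := by
  rintro i ⟨⟨j₀, hj₀, hij₀⟩, hni⟩ j hij
  obtain ⟨hj₀t, hj₀p⟩ := hj₀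
  by_cases hjj : j = j₀
  · exact hjj ▸ hj₀t
  -- j and j₀ are adjacent in the primal graph
  have hadj : (primalGraph Mach).Adj j j₀ := ⟨hjj, ⟨i, Finset.mem_inter.mpr ⟨hij, hij₀⟩⟩⟩
  obtain ⟨s, hjs, hj₀s⟩ := d.edgecover hadj
  -- common ancestor m of s and t containing j₀
  obtain ⟨m, hsm, htm, hj₀m⟩ := d.top j₀ s t hj₀s hj₀t
  -- m must equal t, since j₀ ∉ bag (parent t)
  obtain ⟨n, hn⟩ := htm
  have hmt : m = t := by
    cases n with
    | zero => exact hn.symm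
    | succ k =>
      exfalso
      apply hj₀p
      refine d.conn j₀ t (d.parent t) m hj₀t hj₀m ⟨1, rfl⟩ ⟨k, ?_⟩
      rwa [← Function.iterate_succ_apply]
  -- hence s is a descendant of t
  have hdesc : d.Desc s t := hmt ▸ hsm
  -- if j ∉ bag t then j is inactive and i is an inactive machine, contradiction
  by_contra hjt
  exact hni ⟨j, ⟨hjt, s, hdesc, hjs⟩, hij⟩
end
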